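/- Let $I \subseteq \mathbb{R}$ be an open interval and $y_0 \in I$. For each $n \in \mathbb{N}$, let $A_n$ be an event and $\{Y_n(y)\}_{y\in I}$ a real stochastic process, and let $r \in \mathbb{R}$. Suppose (a) there is a continuous function $f$ on $I$ such that $\lim_{n\to\infty} \mathbb{P}(\{Y_n(y)\le r\}\cap A_n) = f(y)$ for every $y \in I\setminus\{y_0\}$, and (b) there is a continuous function $g$ on $I\times I$ with $g(y,y)=0$ for all $y \in I$ such that $\lim_{n\to\infty}\mathbb{P}(Y_n(y)\le r,\, Y_n(y')>r) = g(y,y')$ for all $y \neq y'$ in $I$. Then $\lim_{n\to\infty}\mathbb{P}(\{Y_n(y_0)\le r\}\cap A_n) = f(y_0)$. -/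

import Mathlib

open MeasureTheory Filter Topology

theorem stmt_11 {Ω : Type*} [MeasurableSpace Ω] (P : Measure Ω) [IsProbabilityMeasure P]
    (c d y₀ : ℝ) (hy₀ : y₀ ∈ Set.Ioo c d)
    (A : ℕ → Set Ω) (Y : ℕ → ℝ → Ω → ℝ) (r : ℝ)
    (f : ℝ → ℝ) (hf : ContinuousOn f (Set.Ioo c d))
    (ha : ∀ y ∈ Set.Ioo c d, y ≠ y₀ →
      Tendsto (fun n => (P ({ω | Y n y ω ≤ r} ∩ A n)).toReal) atTop (nhds (f y)))
    (g : ℝ → ℝ → ℝ)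
    (hgcont : ContinuousOn (fun p : ℝ × ℝ => g p.1 p.2) (Set.Ioo c d ×ˢ Set.Ioo c d))
    (hg0 : ∀ y ∈ Set.Ioo c d, g y y = 0)
    (hb : ∀ y ∈ Set.Ioo c d, ∀ y' ∈ Set.Ioo c d, y ≠ y' →
      Tendsto (fun n => (P {ω | Y n y ω ≤ r ∧ r < Y n y' ω}).toReal) atTop (nhds (g y y'))) :
    Tendsto (fun n => (P ({ω | Y n y₀ ω ≤ r} ∩ A n)).toReal) atTop (nhds (f y₀)) := by
  rw [Metric.tendsto_nhds]
  intro ε hε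
  have hε4 : 0 < ε / 4 := by linarith
  -- continuity facts at y₀
  have hn : 𝓝[Set.Ioo c d] y₀ = 𝓝 y₀ :=
    nhdsWithin_eq_nhds.mpr (isOpen_Ioo.mem_nhds hy₀)
  have hcf : Tendsto f (𝓝 y₀) (𝓝 (f y₀)) := by rw [← hn]; exact hf y₀ hy₀
  have hc1 : Tendsto (fun y => g y₀ y) (𝓝 y₀) (𝓝 0) := by
    have hpr : ContinuousWithinAt (fun y : ℝ => ((y₀, y) : ℝ × ℝ)) (Set.Ioo c d) y₀ :=
      continuousWithinAt_const.prodMk continuousWithinAt_id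
    have : Tendsto (fun y => g y₀ y) (𝓝[Set.Ioo c d] y₀) (𝓝 (g y₀ y₀)) :=
      (hgcont (y₀, y₀) ⟨hy₀, hy₀⟩).tendsto.comp
        (hpr.tendsto_nhdsWithin (fun y hy => Set.mk_mem_prod hy₀ hy))
    rw [← hg0 y₀ hy₀]
    rw [← hn]; exact this
  have hc2 : Tendsto (fun y => g y y₀) (𝓝 y₀) (𝓝 0) := by
    have hpr : ContinuousWithinAt (fun y : ℝ => ((y, y₀) : ℝ × ℝ)) (Set.Ioo c d) y₀ :=
      continuousWithinAt_id.prodMk continuousWithinAt_const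
    have : Tendsto (fun y => g y y₀) (𝓝[Set.Ioo c d] y₀) (𝓝 (g y₀ y₀)) :=
      (hgcont (y₀, y₀) ⟨hy₀, hy₀⟩).tendsto.comp
        (hpr.tendsto_nhdsWithin (fun y hy => Set.mk_mem_prod hy hy₀))
    rw [← hg0 y₀ hy₀]
    rw [← hn]; exact this
  -- find a good y ≠ y₀
  have hev : ∀ᶠ y in 𝓝 y₀, y ∈ Set.Ioo c d ∧ |f y - f y₀| < ε / 4 ∧
      |g y₀ y| < ε / 4 ∧ |g y y₀| < ε / 4 := by
    have e0 : ∀ᶠ y in 𝓝 y₀, y ∈ Set.Ioo c d := isOpen_Ioo.mem_nhds hy₀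
    have e1 : ∀ᶠ y in 𝓝 y₀, |f y - f y₀| < ε / 4 := by
      have := Metric.tendsto_nhds.mp hcf (ε / 4) hε4
      simpa [Real.dist_eq] using this
    have e2 : ∀ᶠ y in 𝓝 y₀, |g y₀ y| < ε / 4 := by
      have := Metric.tendsto_nhds.mp hc1 (ε / 4) hε4
      simpa [Real.dist_eq] using this
    have e3 : ∀ᶠ y in 𝓝 y₀, |g y y₀| < ε / 4 := by
      have := Metric.tendsto_nhds.mp hc2 (ε / 4) hε4
      simpa [Real.dist_eq] using this
    exact e0.and (e1.and (e2.and e3))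
  obtain ⟨y, ⟨hyI, hfy, hg1, hg2⟩, hyne⟩ :
      ∃ y, (y ∈ Set.Ioo c d ∧ |f y - f y₀| < ε / 4 ∧ |g y₀ y| < ε / 4 ∧ |g y y₀| < ε / 4)
        ∧ y ≠ y₀ := by
    have : ∀ᶠ y in 𝓝[≠] y₀, (y ∈ Set.Ioo c d ∧ |f y - f y₀| < ε / 4 ∧
        |g y₀ y| < ε / 4 ∧ |g y y₀| < ε / 4) ∧ y ≠ y₀ :=
      (eventually_nhdsWithin_of_eventually_nhds hev).and self_mem_nhdsWithin
    exact this.exists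
  -- the sequences
  set p : ℕ → ℝ := fun n => (P ({ω | Y n y₀ ω ≤ r} ∩ A n)).toReal with hp
  set q : ℕ → ℝ := fun n => (P ({ω | Y n y ω ≤ r} ∩ A n)).toReal with hq
  set b1 : ℕ → ℝ := fun n => (P {ω | Y n y₀ ω ≤ r ∧ r < Y n y ω}).toReal with hb1
  set b2 : ℕ → ℝ := fun n => (P {ω | Y n y ω ≤ r ∧ r < Y n y₀ ω}).toReal with hb2
  have hq_lim : Tendsto q atTop (𝓝 (f y)) := ha y hyI hyne
  have hb1_lim : Tendsto b1 atTop (𝓝 (g y₀ y)) := hb y₀ hy₀ y hyI (Ne.symm hyne)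
  have hb2_lim : Tendsto b2 atTop (𝓝 (g y y₀)) := hb y hyI y₀ hy₀ hyne
  -- deterministic sandwich
  have key : ∀ n, p n ≤ q n + b1 n ∧ q n ≤ p n + b2 n := by
    intro n
    have t1 : ({ω | Y n y₀ ω ≤ r} ∩ A n) ⊆
        ({ω | Y n y ω ≤ r} ∩ A n) ∪ {ω | Y n y₀ ω ≤ r ∧ r < Y n y ω} := by
      intro ω ⟨h1, h2⟩
      by_cases h : Y n y ω ≤ r
      · exact Or.inl ⟨h, h2⟩
      · exact Or.inr ⟨h1, lt_of_not_ge h⟩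
    have t2 : ({ω | Y n y ω ≤ r} ∩ A n) ⊆
        ({ω | Y n y₀ ω ≤ r} ∩ A n) ∪ {ω | Y n y ω ≤ r ∧ r < Y n y₀ ω} := by
      intro ω ⟨h1, h2⟩
      by_cases h : Y n y₀ ω ≤ r
      · exact Or.inl ⟨h, h2⟩
      · exact Or.inr ⟨h1, lt_of_not_ge h⟩
    constructor
    · have h := (measure_mono (μ := P) t1).trans (measure_union_le _ _)
      have := ENNReal.toReal_mono
        (ENNReal.add_ne_top.mpr ⟨measure_ne_top P _, measure_ne_top P _⟩) h
      rwa [ENNReal.toReal_add (measure_ne_top P _) (measure_ne_top P _)] at this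
    · have h := (measure_mono (μ := P) t2).trans (measure_union_le _ _)
      have := ENNReal.toReal_mono
        (ENNReal.add_ne_top.mpr ⟨measure_ne_top P _, measure_ne_top P _⟩) h
      rwa [ENNReal.toReal_add (measure_ne_top P _) (measure_ne_top P _)] at this
  -- combine
  have eq1 : ∀ᶠ n in atTop, |q n - f y| < ε / 4 := by
    have := Metric.tendsto_nhds.mp hq_lim (ε / 4) hε4
    simpa [Real.dist_eq] using this
  have eb1 : ∀ᶠ n in atTop, |b1 n - g y₀ y| < ε / 4 := by
    have := Metric.tendsto_nhds.mp hb1_lim (ε / 4) hε4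
    simpa [Real.dist_eq] using this
  have eb2 : ∀ᶠ n in atTop, |b2 n - g y y₀| < ε / 4 := by
    have := Metric.tendsto_nhds.mp hb2_lim (ε / 4) hε4
    simpa [Real.dist_eq] using this
  filter_upwards [eq1, eb1, eb2] with n h1 h2 h3
  have hk := key n
  rw [Real.dist_eq]
  rw [abs_lt] at h1 h2 h3 hfy hg1 hg2 ⊢
  constructor <;> nlinarith [hk.1, hk.2]
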